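/- Let n_1,…,n_b be positive integers and k ≥ 1 an integer. Suppose there exist pairwise disjoint subsets S_1,…,S_b of {0,1,…,k−1} such that for every i, the sum over j ∈ S_i of (2j+1) is at least n_i. Then the path forest with path orders n_1,…,n_b can be burned in at most k rounds (the fire associated with j ∈ S_i is started in the i-th path at round k − j). -/

import Mathlib

/-- The path forest with `b` components, the `i`-th being a path on `n i` vertices. -/
def pathForest (b : ℕ) (n : Fin b → ℕ) : SimpleGraph (Σ i : Fin b, Fin (n i)) where
  Adj u v := u.1 = v.1 ∧ (u.2.val + 1 = v.2.val ∨ v.2.val + 1 = u.2.val)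
  symm := by
    constructor
    rintro u v ⟨h1, h2⟩
    exact ⟨h1.symm, h2.symm⟩
  loopless := by
    constructor
    rintro u ⟨-, h⟩
    omega

/-- A burning schedule of length `m ≤ k` burns `G`: for every vertex `v` there is a
round `i` (`0`-indexed, corresponding to round `i+1`) whose activator `x i` reaches `v`
within distance `m - (i+1)`. -/
def BurnsIn {V : Type*} (G : SimpleGraph V) (k : ℕ) : Prop :=
  ∃ m, m ≤ k ∧ ∃ x : Fin m → V, ∀ v : V, ∃ i : Fin m,
    G.Reachable (x i) v ∧ G.dist (x i) v ≤ m - (i.val + 1)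

/-- prefix weight -/
def pw (T : Finset ℕ) (j : ℕ) : ℕ := ∑ j' ∈ T.filter (· < j), (2 * j' + 1)

lemma cover : ∀ (T : Finset ℕ) (p : ℕ), p < (∑ j ∈ T, (2 * j + 1)) →
    ∃ j ∈ T, pw T j ≤ p ∧ p < pw T j + (2 * j + 1) := by
  intro T
  induction T using Finset.strongInduction with
  | _ T ih =>
    intro p hp
    have hT : T.Nonempty := by
      rcases T.eq_empty_or_nonempty with h | h
      · subst h; simp at hp
      · exact h
    obtain ⟨j0, hj0m, hj0min⟩ : ∃ j0 ∈ T, ∀ x ∈ T, j0 ≤ x :=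
      ⟨T.min' hT, T.min'_mem hT, fun x hx => T.min'_le x hx⟩
    by_cases hcase : p < 2 * j0 + 1
    · refine ⟨j0, hj0m, ?_, ?_⟩
      · have : T.filter (· < j0) = ∅ := by
          apply Finset.filter_false_of_mem
          intro x hx
          have := hj0min x hx
          omega
        simp [pw, this]
      · have : T.filter (· < j0) = ∅ := by
          apply Finset.filter_false_of_mem
          intro x hx
          have := hj0min x hx
          omega
        simp [pw, this]; omega
    · have hsum' : (2 * j0 + 1) + ∑ j ∈ T.erase j0, (2 * j + 1) = ∑ j ∈ T, (2 * j + 1) :=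
        Finset.add_sum_erase T (fun j => 2 * j + 1) hj0m
      have := ih (T.erase j0) (Finset.erase_ssubset hj0m) (p - (2 * j0 + 1)) (by omega)
      obtain ⟨j, hj, h1, h2⟩ := this
      have hjT : j ∈ T := Finset.mem_of_mem_erase hj
      have hj0j : j0 < j := by
        have h3 := hj0min j hjT
        have h4 : j ≠ j0 := (Finset.mem_erase.mp hj).1
        omega
      have hmem : j0 ∈ T.filter (· < j) := Finset.mem_filter.mpr ⟨hj0m, hj0j⟩
      have hpw : pw T j = (2 * j0 + 1) + pw (T.erase j0) j := by
        unfold pw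
        rw [Finset.filter_erase]
        exact (Finset.add_sum_erase _ (fun j' => 2 * j' + 1) hmem).symm
      have hq : p - (2 * j0 + 1) + (2 * j0 + 1) = p := Nat.sub_add_cancel (by omega)
      exact ⟨j, hjT, by omega, by omega⟩

lemma pf_walk (b : ℕ) (n : Fin b → ℕ) (i : Fin b) :
    ∀ (d : ℕ) (a c : Fin (n i)), a.val + d = c.val →
      ∃ w : (pathForest b n).Walk ⟨i, a⟩ ⟨i, c⟩, w.length = d := by
  intro d
  induction d with
  | zero =>
    intro a c h
    have : a = c := Fin.ext (by omega)
    subst this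
    exact ⟨.nil, rfl⟩
  | succ d ih =>
    intro a c h
    have ha' : a.val + 1 < n i := by have := c.isLt; omega
    have hadj : (pathForest b n).Adj ⟨i, a⟩ ⟨i, ⟨a.val + 1, ha'⟩⟩ := ⟨rfl, Or.inl rfl⟩
    obtain ⟨w, hw⟩ := ih ⟨a.val + 1, ha'⟩ c (by simp; omega)
    exact ⟨.cons hadj w, by simp [hw]⟩

lemma pf_dist (b : ℕ) (n : Fin b → ℕ) (i : Fin b) (a c : Fin (n i)) :
    (pathForest b n).Reachable ⟨i, a⟩ ⟨i, c⟩ ∧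
      (pathForest b n).dist ⟨i, a⟩ ⟨i, c⟩ ≤ Nat.dist a.val c.val := by
  rcases le_total a.val c.val with h | h
  · obtain ⟨w, hw⟩ := pf_walk b n i (c.val - a.val) a c (by omega)
    refine ⟨⟨w⟩, ?_⟩
    calc (pathForest b n).dist ⟨i, a⟩ ⟨i, c⟩ ≤ w.length := SimpleGraph.dist_le w
      _ ≤ Nat.dist a.val c.val := by rw [hw]; simp [Nat.dist]
  · obtain ⟨w, hw⟩ := pf_walk b n i (a.val - c.val) c a (by omega)
    refine ⟨⟨w.reverse⟩, ?_⟩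
    calc (pathForest b n).dist ⟨i, a⟩ ⟨i, c⟩ ≤ w.reverse.length := SimpleGraph.dist_le _
      _ ≤ Nat.dist a.val c.val := by rw [SimpleGraph.Walk.length_reverse, hw]; simp [Nat.dist]

theorem stmt_13 (b : ℕ) (n : Fin b → ℕ) (hn : ∀ i, 1 ≤ n i) (k : ℕ) (hk : 1 ≤ k)
    (S : Fin b → Finset ℕ)
    (hrange : ∀ i, ∀ j ∈ S i, j ≤ k - 1)
    (hdisj : ∀ i i' : Fin b, i ≠ i' → Disjoint (S i) (S i'))
    (hsum : ∀ i, n i ≤ ∑ j ∈ S i, (2 * j + 1)) :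
    BurnsIn (pathForest b n) k := by
  classical
  rcases Nat.eq_zero_or_pos b with hb | hb
  · refine ⟨0, Nat.zero_le k, Fin.elim0, fun v => ?_⟩
    subst hb
    exact absurd v.1.isLt (by omega)
  · -- the component in which the fire of radius `t` is started
    let comp : ℕ → Fin b := fun t => if h : ∃ i, t ∈ S i then h.choose else ⟨0, hb⟩
    have hcomp : ∀ t (i : Fin b), t ∈ S i → comp t = i := by
      intro t i ht
      have hex : ∃ i, t ∈ S i := ⟨i, ht⟩
      simp only [comp, dif_pos hex]
      by_contra hne'
      exact (Finset.disjoint_left.mp (hdisj hex.choose i hne') hex.choose_spec) ht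
    -- center of the fire of radius `t`
    let ctr : ℕ → ℕ := fun t => min (pw (S (comp t)) t + t) (n (comp t) - 1)
    have hctr : ∀ t, ctr t < n (comp t) := fun t => by
      have := hn (comp t); simp only [ctr]; omega
    refine ⟨k, le_refl k, fun r => ⟨comp (k - 1 - r.val), ⟨ctr (k - 1 - r.val),
      hctr _⟩⟩, fun v => ?_⟩
    obtain ⟨i, p⟩ := v
    obtain ⟨j, hjS, hpw1, hpw2⟩ := cover (S i) p.val (lt_of_lt_of_le p.isLt (hsum i))
    have hjk : j ≤ k - 1 := hrange i j hjS
    have hrlt : k - 1 - j < k := by omega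
    refine ⟨⟨k - 1 - j, hrlt⟩, ?_⟩
    have hci : comp j = i := hcomp j i hjS
    subst hci
    have hval : (⟨k - 1 - j, hrlt⟩ : Fin k).val = k - 1 - j := rfl
    have hrv2 : k - 1 - (⟨k - 1 - j, hrlt⟩ : Fin k).val = j := by rw [hval]; omega
    beta_reduce
    rw [hrv2]
    obtain ⟨hreach, hdist⟩ := pf_dist b n (comp j) ⟨ctr j, hctr j⟩ p
    refine ⟨hreach, le_trans hdist ?_⟩
    have hdd : Nat.dist ((⟨ctr j, hctr j⟩ : Fin (n (comp j))).val) p.val ≤ j := by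
      have hplt : p.val < n (comp j) := p.isLt
      have h1 : 1 ≤ n (comp j) := hn _
      have hctr' : (⟨ctr j, hctr j⟩ : Fin (n (comp j))).val
          = min (pw (S (comp j)) j + j) (n (comp j) - 1) := rfl
      rw [hctr']
      simp only [Nat.dist]
      omega
    omega
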